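/- arXiv:1109.2445 — 2 statements merged into one kernel-verified Lean document; each statement's English description precedes it below -/
import Mathlib

section
/- Assume that for every finite bipartite simple graph H, every integer M ≥ 1, and every M-cover H̃ of H (via a permutation voltage assignment) with natural projection π, the coefficientwise inequality Π(p(H̃)) ⪯ p(H)^M holds. Then for every finite simple graph G with attractive interactions (J ≥ 0), the Bethe partition function is bounded by the true partition function: limsup_{M→∞} ( (M!)^{-|E|} · Σ_α Z(G̃_α) )^{1/M} ≤ Z(G;J,h), where the sum ranges over all permutation voltage assignments α on G with values in S_M, G̃_α is the corresponding M-cover with induced interactions, and (M!)^{-|E|} Σ_α Z(G̃_α) is the mean of Z over all M-covers. -/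
open scoped Classical

/-- Multivariate independence polynomial of `G`: sum over independent sets `I`
of `∏ v ∈ I, X v`. -/
noncomputable def indepPoly {V : Type} [Fintype V] (G : SimpleGraph V) :
    MvPolynomial V ℝ :=
  ∑ I ∈ Finset.univ.filter (fun I : Finset V => ∀ u ∈ I, ∀ v ∈ I, ¬ G.Adj u v),
    ∏ v ∈ I, MvPolynomial.X v

/-- A permutation voltage assignment on `G` with values in `S_M`:
`α u v = (α v u)⁻¹` on directed edges, and (as a normalization) `α u v = 1`
on non-adjacent pairs. -/
def IsVoltage {V : Type} (G : SimpleGraph V) (M : ℕ)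
    (α : V → V → Equiv.Perm (Fin M)) : Prop :=
  (∀ u v, G.Adj u v → α v u = (α u v)⁻¹) ∧ (∀ u v, ¬ G.Adj u v → α u v = 1)

/-- The `M`-cover of `G` determined by a voltage assignment `α`:
`(u,k)` is adjacent to `(v,l)` exactly when `u ~ v` in `G` and `l = α u v k`. -/
def cover {V : Type} (G : SimpleGraph V) (M : ℕ)
    (α : V → V → Equiv.Perm (Fin M)) : SimpleGraph (V × Fin M) :=
  SimpleGraph.fromRel (fun p q => G.Adj p.1 q.1 ∧ q.2 = α p.1 q.1 p.2)

/-- Partition function of the binary pairwise model on `G` with interactions `J, h`. -/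
noncomputable def partitionZ {V : Type} [Fintype V] (G : SimpleGraph V)
    (J : Sym2 V → ℝ) (h : V → ℝ) : ℝ :=
  ∑ s : V → Bool, Real.exp
    ((∑ e ∈ G.edgeFinset,
        J e * Sym2.lift ⟨fun u v => (if s u then (1:ℝ) else 0) * (if s v then (1:ℝ) else 0),
          fun u v => by ring⟩ e)
      + ∑ v, h v * (if s v then (1:ℝ) else 0))

/-- The subdivision graph `G'` of `G`: vertices `V ⊔ E`, with `v ∈ V` adjacent to
`e ∈ E` exactly when `v` is an endpoint of `e`. -/
def subdivision {V : Type} (G : SimpleGraph V) : SimpleGraph (V ⊕ G.edgeSet) :=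
  SimpleGraph.fromRel (fun a b =>
    ∃ (v : V) (e : G.edgeSet), a = Sum.inl v ∧ b = Sum.inr e ∧ v ∈ (e : Sym2 V))

section Aux


noncomputable def iSum {A : Type} [Fintype A] (K : SimpleGraph A) (w : A → ℝ) : ℝ :=
  ∑ I ∈ Finset.univ.filter (fun I : Finset A => ∀ u ∈ I, ∀ v ∈ I, ¬ K.Adj u v),
    ∏ v ∈ I, w v

lemma eval_indepPoly {A : Type} [Fintype A] (K : SimpleGraph A) (w : A → ℝ) :
    MvPolynomial.eval w (indepPoly K) = iSum K w := by
  simp [indepPoly, iSum]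

lemma eval_le_of_coeff_le {σ : Type*} {p q : MvPolynomial σ ℝ}
    (hc : ∀ m, MvPolynomial.coeff m p ≤ MvPolynomial.coeff m q)
    {w : σ → ℝ} (hw : ∀ i, 0 ≤ w i) :
    MvPolynomial.eval w p ≤ MvPolynomial.eval w q := by
  classical
  rw [MvPolynomial.eval_eq, MvPolynomial.eval_eq]
  rw [Finset.sum_subset (Finset.subset_union_left (s₁ := p.support) (s₂ := q.support)),
      Finset.sum_subset (Finset.subset_union_right (s₁ := p.support) (s₂ := q.support))]
  · apply Finset.sum_le_sum
    intro m _
    apply mul_le_mul_of_nonneg_right (hc m)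
    exact Finset.prod_nonneg fun i _ => pow_nonneg (hw i) _
  · intro m _ hm
    rw [MvPolynomial.notMem_support_iff.mp hm, zero_mul]
  · intro m _ hm
    rw [MvPolynomial.notMem_support_iff.mp hm, zero_mul]

lemma iSum_congr_equiv {A B : Type} [Fintype A] [Fintype B] (K : SimpleGraph A)
    (L : SimpleGraph B) (e : A ≃ B) (hadj : ∀ a a', K.Adj a a' ↔ L.Adj (e a) (e a'))
    (w : B → ℝ) : iSum K (w ∘ e) = iSum L w := by
  classical
  unfold iSum
  refine Finset.sum_nbij' (fun I => I.image e) (fun I => I.image e.symm) ?_ ?_ ?_ ?_ ?_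
  · intro I hI
    simp only [Finset.mem_filter, Finset.mem_univ, true_and] at hI ⊢
    intro u hu v hv
    simp only [Finset.mem_image] at hu hv
    obtain ⟨a, ha, rfl⟩ := hu
    obtain ⟨b, hb, rfl⟩ := hv
    rw [← hadj]
    exact hI a ha b hb
  · intro I hI
    simp only [Finset.mem_filter, Finset.mem_univ, true_and] at hI ⊢
    intro u hu v hv
    simp only [Finset.mem_image] at hu hv
    obtain ⟨a, ha, rfl⟩ := hu
    obtain ⟨b, hb, rfl⟩ := hv
    rw [hadj, e.apply_symm_apply, e.apply_symm_apply]
    exact hI a ha b hb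
  · intro I _; simp [Finset.image_image]
  · intro I _; simp [Finset.image_image]
  · intro I _
    rw [Finset.prod_image (fun x _ y _ hxy => e.injective hxy)]
    rfl





lemma subdivision_adj_inl_inr {A : Type} (K : SimpleGraph A) (v : A) (e : K.edgeSet) :
    (subdivision K).Adj (Sum.inl v) (Sum.inr e) ↔ v ∈ (e : Sym2 A) := by
  constructor
  · rintro ⟨-, ⟨v', e', h1, h2, h3⟩ | ⟨v', e', h1, h2, h3⟩⟩
    · cases h1; cases h2; exact h3
    · exact absurd h1 (by simp)
  · intro hv
    exact ⟨by simp, Or.inl ⟨v, e, rfl, rfl, hv⟩⟩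

lemma subdivision_adj_inr_inl {A : Type} (K : SimpleGraph A) (v : A) (e : K.edgeSet) :
    (subdivision K).Adj (Sum.inr e) (Sum.inl v) ↔ v ∈ (e : Sym2 A) := by
  rw [SimpleGraph.adj_comm]; exact subdivision_adj_inl_inr K v e

lemma subdivision_not_adj_inl {A : Type} (K : SimpleGraph A) (u v : A) :
    ¬ (subdivision K).Adj (Sum.inl u) (Sum.inl v) := by
  rintro ⟨-, ⟨v', e', h1, h2, h3⟩ | ⟨v', e', h1, h2, h3⟩⟩ <;> simp at h1 h2

lemma subdivision_not_adj_inr {A : Type} (K : SimpleGraph A) (d e : K.edgeSet) :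
    ¬ (subdivision K).Adj (Sum.inr d) (Sum.inr e) := by
  rintro ⟨-, ⟨v', e', h1, h2, h3⟩ | ⟨v', e', h1, h2, h3⟩⟩ <;> simp at h1 h2

lemma prod_disjSum {A B M : Type} [CommMonoid M] (s : Finset A) (t : Finset B) (f : A ⊕ B → M) :
    ∏ x ∈ s.disjSum t, f x = (∏ a ∈ s, f (Sum.inl a)) * ∏ b ∈ t, f (Sum.inr b) := by
  rw [← Finset.map_inl_disjUnion_map_inr, Finset.prod_disjUnion, Finset.prod_map,
    Finset.prod_map]
  rfl

lemma indep_disjSum {A : Type} [Fintype A] (K : SimpleGraph A) (T : Finset A)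
    (F : Finset K.edgeSet) :
    (∀ u ∈ T.disjSum F, ∀ v ∈ T.disjSum F, ¬ (subdivision K).Adj u v) ↔
      (∀ v ∈ T, ∀ e ∈ F, v ∉ (e : Sym2 A)) := by
  constructor
  · intro H v hv e he hve
    exact H _ (Finset.inl_mem_disjSum.2 hv) _ (Finset.inr_mem_disjSum.2 he)
      ((subdivision_adj_inl_inr K v e).2 hve)
  · intro H x hx y hy
    rcases x with x | x <;> rcases y with y | y
    · exact subdivision_not_adj_inl K x y
    · rw [subdivision_adj_inl_inr]
      exact H x (Finset.inl_mem_disjSum.1 hx) y (Finset.inr_mem_disjSum.1 hy)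
    · rw [subdivision_adj_inr_inl]
      exact fun hv => H y (Finset.inl_mem_disjSum.1 hy) x (Finset.inr_mem_disjSum.1 hx) hv
    · exact subdivision_not_adj_inr K x y

lemma sum_fun_bool {A : Type} [Fintype A] (f : (A → Bool) → ℝ) :
    ∑ s : A → Bool, f s = ∑ T : Finset A, f (fun v => v ∈ T) := by
  refine Fintype.sum_equiv ⟨fun s => Finset.univ.filter (fun v => s v = true),
    fun T v => decide (v ∈ T), fun s => ?_, fun T => ?_⟩ _ _ (fun s => ?_)
  · funext v; simp
  · ext v; simp
  · congr 1; funext v; simp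

lemma liftval {A : Type} (s : A → Bool) (e : Sym2 A) :
    Sym2.lift ⟨fun u v => (if s u then (1:ℝ) else 0) * (if s v then (1:ℝ) else 0),
      fun u v => by ring⟩ e = if (∀ v ∈ e, s v = true) then 1 else 0 := by
  induction e using Sym2.ind with
  | _ u v =>
    simp only [Sym2.lift_mk, Sym2.mem_iff]
    by_cases hu : s u <;> by_cases hv : s v <;> simp [hu, hv]

lemma exp_edge {A : Type} (s : A → Bool) (J : Sym2 A → ℝ) (e : Sym2 A) :
    Real.exp (J e * Sym2.lift ⟨fun u v => (if s u then (1:ℝ) else 0) * (if s v then (1:ℝ) else 0),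
      fun u v => by ring⟩ e)
    = (Real.exp (J e) - 1) *
        Sym2.lift ⟨fun u v => (if s u then (1:ℝ) else 0) * (if s v then (1:ℝ) else 0),
          fun u v => by ring⟩ e + 1 := by
  simp only [liftval]
  by_cases h : (∀ v ∈ e, s v = true)
  · rw [if_pos h, mul_one, mul_one]; ring
  · rw [if_neg h, mul_zero, mul_zero]; simp

noncomputable def chiE {A : Type} (s : A → Bool) : Sym2 A → ℝ :=
  Sym2.lift ⟨fun u v => (if s u then (1:ℝ) else 0) * (if s v then (1:ℝ) else 0),
    fun u v => by ring⟩

lemma chiE_eq {A : Type} (s : A → Bool) (e : Sym2 A) :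
    chiE s e = if (∀ v ∈ e, s v = true) then 1 else 0 := liftval s e

lemma exp_edge' {A : Type} (s : A → Bool) (J : Sym2 A → ℝ) (e : Sym2 A) :
    Real.exp (J e * chiE s e) = (Real.exp (J e) - 1) * chiE s e + 1 := exp_edge s J e

lemma prod_exp_compl {A : Type} [Fintype A] (h : A → ℝ) (T : Finset A) :
    ∏ v ∈ Tᶜ, Real.exp (h v) = Real.exp (∑ v, h v) * ∏ v ∈ T, Real.exp (-h v) := by
  symm
  rw [Real.exp_sum, ← Finset.prod_mul_prod_compl T (fun v => Real.exp (h v)),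
    mul_right_comm, ← Finset.prod_mul_distrib]
  simp [← Real.exp_add]

lemma partitionZ_eq {A : Type} [Fintype A] (K : SimpleGraph A) (J : Sym2 A → ℝ) (h : A → ℝ) :
    partitionZ K J h
      = Real.exp (∑ v, h v) *
        iSum (subdivision K)
          (Sum.elim (fun v => Real.exp (-h v)) (fun e => Real.exp (J (e : Sym2 A)) - 1)) := by
  classical
  have hZ : partitionZ K J h = ∑ s : A → Bool,
      Real.exp ((∑ e ∈ K.edgeFinset, J e * chiE s e) + ∑ v, h v * (if s v then 1 else 0)) := rfl
  rw [hZ]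
  have h1 : ∀ s : A → Bool, (∑ e ∈ K.edgeFinset, J e * chiE s e)
      = ∑ e : K.edgeSet, J ↑e * chiE s ↑e :=
    fun s => Finset.sum_subtype _ (fun x => SimpleGraph.mem_edgeFinset) _
  -- Step 1 : expand the exponential
  have step1 : (∑ s : A → Bool,
      Real.exp ((∑ e ∈ K.edgeFinset, J e * chiE s e) + ∑ v, h v * (if s v then 1 else 0)))
      = ∑ F : Finset K.edgeSet, ∑ s : A → Bool,
          (∏ e ∈ F, (Real.exp (J ↑e) - 1)) *
            ((∏ e ∈ F, chiE s ↑e) * ∏ v, Real.exp (h v * (if s v then 1 else 0))) := by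
    rw [← Finset.sum_comm]
    refine Finset.sum_congr rfl fun s _ => ?_
    rw [h1 s, Real.exp_add, Real.exp_sum, Real.exp_sum]
    have e0 : (∏ e : K.edgeSet, Real.exp (J ↑e * chiE s ↑e))
        = ∏ e : K.edgeSet, ((Real.exp (J ↑e) - 1) * chiE s ↑e + 1) :=
      Finset.prod_congr rfl fun e _ => exp_edge' s J ↑e
    have e1 : (∏ e : K.edgeSet, Real.exp (J ↑e * chiE s ↑e))
        = ∑ F : Finset K.edgeSet, ∏ e ∈ F, ((Real.exp (J ↑e) - 1) * chiE s ↑e) := by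
      rw [e0, Fintype.prod_add]
      simp
    rw [e1, Finset.sum_mul]
    refine Finset.sum_congr rfl fun F _ => ?_
    rw [Finset.prod_mul_distrib, mul_assoc]
  rw [step1]
  -- Step 2 : evaluate the spin sum for fixed F
  have step2 : ∀ F : Finset K.edgeSet,
      (∑ s : A → Bool, (∏ e ∈ F, (Real.exp (J ↑e) - 1)) *
          ((∏ e ∈ F, chiE s ↑e) * ∏ v, Real.exp (h v * (if s v then 1 else 0))))
      = ∑ T : Finset A, (∏ e ∈ F, (Real.exp (J ↑e) - 1)) *
          ((if (∀ e ∈ F, ∀ v ∈ (e : Sym2 A), v ∈ T) then 1 else 0) * ∏ v ∈ T, Real.exp (h v)) := by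
    intro F
    rw [sum_fun_bool]
    refine Finset.sum_congr rfl fun T _ => ?_
    congr 1
    congr 1
    · have c0 : (∏ e ∈ F, chiE (fun v => decide (v ∈ T)) ↑e)
          = ∏ e ∈ F, if (∀ v ∈ (e : Sym2 A), v ∈ T) then (1:ℝ) else 0 := by
        refine Finset.prod_congr rfl fun e _ => ?_
        rw [chiE_eq]
        simp
      rw [c0, Finset.prod_boole]
      congr 1
    · calc (∏ v, Real.exp (h v * (if (v ∈ T : Bool) then 1 else 0)))
          = ∏ v, (if v ∈ T then Real.exp (h v) else 1) := by
            refine Finset.prod_congr rfl fun v _ => ?_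
            by_cases hv : v ∈ T <;> simp [hv]
        _ = ∏ v ∈ Finset.univ ∩ T, Real.exp (h v) := Finset.prod_ite_mem _ _ _
        _ = ∏ v ∈ T, Real.exp (h v) := by rw [Finset.univ_inter]
  rw [Finset.sum_congr rfl (fun F _ => step2 F)]
  -- Step 3 : reindex T by its complement
  have step3 : ∀ F : Finset K.edgeSet,
      (∑ T : Finset A, (∏ e ∈ F, (Real.exp (J ↑e) - 1)) *
          ((if (∀ e ∈ F, ∀ v ∈ (e : Sym2 A), v ∈ T) then 1 else 0) * ∏ v ∈ T, Real.exp (h v)))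
      = ∑ T : Finset A, (∏ e ∈ F, (Real.exp (J ↑e) - 1)) *
          ((if (∀ v ∈ T, ∀ e ∈ F, v ∉ (e : Sym2 A)) then 1 else 0) *
            (Real.exp (∑ v, h v) * ∏ v ∈ T, Real.exp (-h v))) := by
    intro F
    refine Fintype.sum_bijective compl (Function.Involutive.bijective (fun T => compl_compl T))
      _ _ (fun T => ?_)
    congr 2
    · refine if_congr ?_ rfl rfl
      constructor
      · intro H v hv e he hve
        exact (Finset.mem_compl.1 hv) (H e he v hve)
      · intro H e he v hve
        by_contra hvT
        exact H v (Finset.mem_compl.2 hvT) e he hve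
    · have := prod_exp_compl h Tᶜ
      rwa [compl_compl] at this
  rw [Finset.sum_congr rfl (fun F _ => step3 F)]
  -- Step 4 : identify the right-hand side
  have step4 : iSum (subdivision K)
      (Sum.elim (fun v => Real.exp (-h v)) (fun e => Real.exp (J (e : Sym2 A)) - 1))
      = ∑ F : Finset K.edgeSet, ∑ T : Finset A,
          (if (∀ v ∈ T, ∀ e ∈ F, v ∉ (e : Sym2 A)) then 1 else 0) *
            ((∏ v ∈ T, Real.exp (-h v)) * ∏ e ∈ F, (Real.exp (J ↑e) - 1)) := by
    unfold iSum
    rw [Finset.sum_filter]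
    have hbij : Function.Bijective
        (fun p : Finset K.edgeSet × Finset A => p.2.disjSum p.1) := by
      constructor
      · intro p q hpq
        simp only [Finset.disjSum_inj] at hpq
        exact Prod.ext hpq.2 hpq.1
      · intro I
        exact ⟨(I.toRight, I.toLeft), Finset.toLeft_disjSum_toRight⟩
    rw [← Fintype.sum_bijective _ hbij _ _ (fun p => rfl), Fintype.sum_prod_type]
    refine Finset.sum_congr rfl fun F _ => Finset.sum_congr rfl fun T _ => ?_
    rw [prod_disjSum]
    simp only [Sum.elim_inl, Sum.elim_inr]
    by_cases hc : (∀ v ∈ T, ∀ e ∈ F, v ∉ (e : Sym2 A))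
    · rw [if_pos ((indep_disjSum K T F).2 hc), if_pos hc, one_mul]
    · rw [if_neg (fun H => hc ((indep_disjSum K T F).1 H)), if_neg hc, zero_mul]
  rw [step4, Finset.mul_sum]
  refine Finset.sum_congr rfl fun F _ => ?_
  rw [Finset.mul_sum]
  refine Finset.sum_congr rfl fun T _ => ?_
  ring



lemma sym2_rep {A : Type} (e : Sym2 A) : ∃ p : A × A, s(p.1, p.2) = e := by
  induction e using Sym2.ind with
  | _ x y => exact ⟨(x, y), rfl⟩

noncomputable def rep {A : Type} (e : Sym2 A) : A × A := Classical.choose (sym2_rep e)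

lemma rep_spec {A : Type} (e : Sym2 A) : s((rep e).1, (rep e).2) = e := Classical.choose_spec (sym2_rep e)

lemma rep_spec' {A : Type} (e : Sym2 A) : s((rep e).1, (rep e).2) = e := rep_spec e

lemma adj_rep {A : Type} {K : SimpleGraph A} (e : K.edgeSet) :
    K.Adj (rep (e : Sym2 A)).1 (rep (e : Sym2 A)).2 := by
  rw [← SimpleGraph.mem_edgeSet, rep_spec']
  exact e.2

lemma fst_mem_rep {A : Type} (e : Sym2 A) : (rep e).1 ∈ e := by
  have := Sym2.mem_mk_left (rep e).1 (rep e).2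
  rwa [rep_spec' e] at this

lemma snd_mem_rep {A : Type} (e : Sym2 A) : (rep e).2 ∈ e := by
  have := Sym2.mem_mk_right (rep e).1 (rep e).2
  rwa [rep_spec' e] at this

lemma cover_adj_iff {V : Type} {G : SimpleGraph V} {M : ℕ}
    {α : V → V → Equiv.Perm (Fin M)} (hα : IsVoltage G M α) (x y : V × Fin M) :
    (cover G M α).Adj x y ↔ G.Adj x.1 y.1 ∧ y.2 = α x.1 y.1 x.2 := by
  constructor
  · rintro ⟨hne, h | h⟩
    · exact h
    · refine ⟨h.1.symm, ?_⟩
      rw [h.2, hα.1 y.1 x.1 h.1]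
      simp
  · rintro ⟨hadj, hl⟩
    refine ⟨fun hc => hadj.ne (congrArg Prod.fst hc), Or.inl ⟨hadj, hl⟩⟩

lemma subdivision_colorable {A : Type} (K : SimpleGraph A) : (subdivision K).Colorable 2 := by
  refine ⟨SimpleGraph.Coloring.mk (Sum.elim (fun _ => 0) (fun _ => 1)) ?_⟩
  rintro (a | a) (b | b) hab
  · exact absurd hab (subdivision_not_adj_inl K a b)
  · simp
  · simp
  · exact absurd hab (subdivision_not_adj_inr K a b)

noncomputable def voltEquiv {V : Type} (G : SimpleGraph V) (M : ℕ) :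
    {α : V → V → Equiv.Perm (Fin M) // IsVoltage G M α} ≃ (G.edgeSet → Equiv.Perm (Fin M)) where
  toFun α := fun e => α.1 (rep (e : Sym2 V)).1 (rep (e : Sym2 V)).2
  invFun f := by
    refine ⟨fun u v => if h : G.Adj u v then
      (if (rep s(u, v)).1 = u then f ⟨s(u, v), h⟩ else (f ⟨s(u, v), h⟩)⁻¹) else 1, ?_, ?_⟩
    · intro u v huv
      have hvu : G.Adj v u := huv.symm
      dsimp only
      rw [dif_pos huv, dif_pos hvu]
      have hsw : s(v, u) = s(u, v) := Sym2.eq_swap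
      have hne : u ≠ v := huv.ne
      have hrep : (rep s(u,v)).1 = u ∨ (rep s(u,v)).1 = v := by
        rcases Sym2.mem_iff.1 (fst_mem_rep s(u,v)) with h | h
        · exact Or.inl h
        · exact Or.inr h
      have hfe : (⟨s(v,u), hvu⟩ : G.edgeSet) = ⟨s(u,v), huv⟩ := Subtype.ext hsw
      rcases hrep with h1 | h1
      · rw [if_pos h1, hfe]
        have : (rep s(v,u)).1 = u := by rw [hsw]; exact h1
        rw [if_neg (by rw [this]; exact hne)]
      · rw [if_neg (show ¬(rep s(u,v)).1 = u from fun hh => hne (h1.symm.trans hh).symm), hfe]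
        have h2 : (rep s(v,u)).1 = v := by rw [hsw]; exact h1
        rw [if_pos h2, inv_inv]
    · intro u v huv
      dsimp only
      rw [dif_neg huv]
  left_inv := by
    rintro ⟨α, hα⟩
    apply Subtype.ext
    funext u v
    simp only
    by_cases h : G.Adj u v
    · rw [dif_pos h]
      have hrep := rep_spec' (s(u,v))
      rcases Sym2.eq_iff.1 hrep with ⟨h1, h2⟩ | ⟨h1, h2⟩
      · rw [if_pos h1, h1, h2]
      · rw [if_neg (by rw [h1]; exact fun hh => h.ne hh.symm), h1, h2, hα.1 u v h, inv_inv]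
    · rw [dif_neg h, (hα.2 u v h)]
  right_inv := by
    intro f
    funext e
    simp only
    have hadj : G.Adj (rep (e : Sym2 V)).1 (rep (e : Sym2 V)).2 := adj_rep e
    rw [dif_pos hadj]
    have he : (⟨s((rep (e : Sym2 V)).1, (rep (e : Sym2 V)).2), hadj⟩ : G.edgeSet) = e :=
      Subtype.ext (rep_spec' (e : Sym2 V))
    have hz : s((rep (e : Sym2 V)).1, (rep (e : Sym2 V)).2) = (e : Sym2 V) := rep_spec' _
    rw [he, hz, if_pos rfl]

lemma card_voltage {V : Type} [Fintype V] (G : SimpleGraph V) (M : ℕ) :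
    Fintype.card {α : V → V → Equiv.Perm (Fin M) // IsVoltage G M α}
      = (M.factorial) ^ G.edgeFinset.card := by
  rw [Fintype.card_congr (voltEquiv G M), Fintype.card_fun, Fintype.card_perm, Fintype.card_fin,
    SimpleGraph.edgeFinset, Set.toFinset_card]

noncomputable def subVolt {V : Type} (G : SimpleGraph V) (M : ℕ)
    (α : V → V → Equiv.Perm (Fin M)) :
    (V ⊕ G.edgeSet) → (V ⊕ G.edgeSet) → Equiv.Perm (Fin M)
  | Sum.inl v, Sum.inr e =>
      if v = (rep (e : Sym2 V)).2 ∧ v ≠ (rep (e : Sym2 V)).1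
      then (α (rep (e : Sym2 V)).1 (rep (e : Sym2 V)).2)⁻¹ else 1
  | Sum.inr e, Sum.inl v =>
      if v = (rep (e : Sym2 V)).2 ∧ v ≠ (rep (e : Sym2 V)).1
      then α (rep (e : Sym2 V)).1 (rep (e : Sym2 V)).2 else 1
  | _, _ => 1

lemma subVolt_inl_inr {V : Type} (G : SimpleGraph V) (M : ℕ)
    (α : V → V → Equiv.Perm (Fin M)) (v : V) (e : G.edgeSet) :
    subVolt G M α (Sum.inl v) (Sum.inr e)
      = if v = (rep (e : Sym2 V)).2 ∧ v ≠ (rep (e : Sym2 V)).1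
        then (α (rep (e : Sym2 V)).1 (rep (e : Sym2 V)).2)⁻¹ else 1 := rfl

lemma subVolt_inr_inl {V : Type} (G : SimpleGraph V) (M : ℕ)
    (α : V → V → Equiv.Perm (Fin M)) (v : V) (e : G.edgeSet) :
    subVolt G M α (Sum.inr e) (Sum.inl v)
      = if v = (rep (e : Sym2 V)).2 ∧ v ≠ (rep (e : Sym2 V)).1
        then α (rep (e : Sym2 V)).1 (rep (e : Sym2 V)).2 else 1 := rfl

lemma subVolt_isVoltage {V : Type} (G : SimpleGraph V) (M : ℕ)
    (α : V → V → Equiv.Perm (Fin M)) : IsVoltage (subdivision G) M (subVolt G M α) := by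
  constructor
  · rintro (u | u) (v | v) hadj
    · exact absurd hadj (subdivision_not_adj_inl G u v)
    · rw [subVolt_inl_inr, subVolt_inr_inl]
      by_cases hc : u = (rep (v : Sym2 V)).2 ∧ u ≠ (rep (v : Sym2 V)).1
      · rw [if_pos hc, if_pos hc, inv_inv]
      · rw [if_neg hc, if_neg hc, inv_one]
    · rw [subVolt_inl_inr, subVolt_inr_inl]
      by_cases hc : v = (rep (u : Sym2 V)).2 ∧ v ≠ (rep (u : Sym2 V)).1
      · rw [if_pos hc, if_pos hc]
      · rw [if_neg hc, if_neg hc, inv_one]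
    · exact absurd hadj (subdivision_not_adj_inr G u v)
  · rintro (u | u) (v | v) hnadj
    · rfl
    · rw [subVolt_inl_inr, if_neg]
      rintro ⟨h1, -⟩
      exact hnadj ((subdivision_adj_inl_inr G u v).2 (by rw [h1]; exact snd_mem_rep _))
    · rw [subVolt_inr_inl, if_neg]
      rintro ⟨h1, -⟩
      exact hnadj ((subdivision_adj_inr_inl G v u).2 (by rw [h1]; exact snd_mem_rep _))
    · rfl

lemma cover_map_fst_mem {V : Type} {G : SimpleGraph V} {M : ℕ}
    {α : V → V → Equiv.Perm (Fin M)} (hα : IsVoltage G M α) :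
    ∀ z : Sym2 (V × Fin M), z ∈ (cover G M α).edgeSet → Sym2.map Prod.fst z ∈ G.edgeSet := by
  intro z hz
  induction z using Sym2.ind with
  | _ x y =>
    rw [Sym2.map_pair_eq]
    rw [SimpleGraph.mem_edgeSet] at hz ⊢
    exact ((cover_adj_iff hα x y).1 hz).1

lemma cover_edge_form {V : Type} {G : SimpleGraph V} {M : ℕ}
    {α : V → V → Equiv.Perm (Fin M)} (hα : IsVoltage G M α) :
    ∀ z : Sym2 (V × Fin M), z ∈ (cover G M α).edgeSet →
      ∃ k : Fin M, z = s(((rep (Sym2.map Prod.fst z)).1, k),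
        ((rep (Sym2.map Prod.fst z)).2,
          α (rep (Sym2.map Prod.fst z)).1 (rep (Sym2.map Prod.fst z)).2 k)) := by
  intro z hz
  induction z using Sym2.ind with
  | _ x y =>
    rw [SimpleGraph.mem_edgeSet] at hz
    obtain ⟨hadj, hl⟩ := (cover_adj_iff hα x y).1 hz
    rw [Sym2.map_pair_eq]
    rcases Sym2.eq_iff.1 (rep_spec' s(x.1, y.1)) with ⟨h1, h2⟩ | ⟨h1, h2⟩
    · refine ⟨x.2, ?_⟩
      rw [h1, h2, ← hl]
    · refine ⟨y.2, ?_⟩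
      rw [h1, h2]
      have hx2 : α y.1 x.1 y.2 = x.2 := by
        rw [hα.1 x.1 y.1 hadj, hl]
        simp
      rw [hx2]
      exact Sym2.eq_swap

lemma idx_unique {V : Type} {G : SimpleGraph V} {M : ℕ}
    (α : V → V → Equiv.Perm (Fin M)) (e : G.edgeSet) {k k' : Fin M}
    (h : s(((rep (e : Sym2 V)).1, k), ((rep (e : Sym2 V)).2,
            α (rep (e : Sym2 V)).1 (rep (e : Sym2 V)).2 k))
       = s(((rep (e : Sym2 V)).1, k'), ((rep (e : Sym2 V)).2,
            α (rep (e : Sym2 V)).1 (rep (e : Sym2 V)).2 k'))) : k = k' := by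
  rcases Sym2.eq_iff.1 h with ⟨h1, h2⟩ | ⟨h1, h2⟩
  · exact congrArg Prod.snd h1
  · exact absurd (congrArg Prod.fst h1) (adj_rep e).ne

noncomputable def mape {V : Type} {G : SimpleGraph V} {M : ℕ}
    {α : V → V → Equiv.Perm (Fin M)} (hα : IsVoltage G M α)
    (et : (cover G M α).edgeSet) : G.edgeSet :=
  ⟨Sym2.map Prod.fst (et : Sym2 (V × Fin M)), cover_map_fst_mem hα _ et.2⟩

noncomputable def idxe {V : Type} {G : SimpleGraph V} {M : ℕ}
    {α : V → V → Equiv.Perm (Fin M)} (hα : IsVoltage G M α)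
    (et : (cover G M α).edgeSet) : Fin M :=
  Classical.choose (cover_edge_form hα _ et.2)

lemma idxe_spec {V : Type} {G : SimpleGraph V} {M : ℕ}
    {α : V → V → Equiv.Perm (Fin M)} (hα : IsVoltage G M α)
    (et : (cover G M α).edgeSet) :
    (et : Sym2 (V × Fin M)) = s(((rep ((mape hα et : G.edgeSet) : Sym2 V)).1, idxe hα et),
      ((rep ((mape hα et : G.edgeSet) : Sym2 V)).2,
        α (rep ((mape hα et : G.edgeSet) : Sym2 V)).1
          (rep ((mape hα et : G.edgeSet) : Sym2 V)).2 (idxe hα et))) :=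
  Classical.choose_spec (cover_edge_form hα _ et.2)

noncomputable def coverSubEquiv {V : Type} {G : SimpleGraph V} {M : ℕ}
    {α : V → V → Equiv.Perm (Fin M)} (hα : IsVoltage G M α) :
    ((V × Fin M) ⊕ (cover G M α).edgeSet) ≃ ((V ⊕ G.edgeSet) × Fin M) where
  toFun x := match x with
    | Sum.inl p => (Sum.inl p.1, p.2)
    | Sum.inr et => (Sum.inr (mape hα et), idxe hα et)
  invFun y := match y with
    | (Sum.inl v, k) => Sum.inl (v, k)
    | (Sum.inr e, k) => Sum.inr ⟨s(((rep (e : Sym2 V)).1, k), ((rep (e : Sym2 V)).2,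
        α (rep (e : Sym2 V)).1 (rep (e : Sym2 V)).2 k)),
        (SimpleGraph.mem_edgeSet _).mpr ((cover_adj_iff hα ((rep (e : Sym2 V)).1, k)
          ((rep (e : Sym2 V)).2, α (rep (e : Sym2 V)).1 (rep (e : Sym2 V)).2 k)).2
          ⟨adj_rep e, rfl⟩)⟩
  left_inv := by
    rintro (p | et)
    · rfl
    · dsimp only
      exact congrArg Sum.inr (Subtype.ext (idxe_spec hα et).symm)
  right_inv := by
    rintro ⟨(v | e), k⟩
    · rfl
    · dsimp only
      have hmap : Sym2.map Prod.fst
          (s(((rep (e : Sym2 V)).1, k), ((rep (e : Sym2 V)).2,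
            α (rep (e : Sym2 V)).1 (rep (e : Sym2 V)).2 k)) : Sym2 (V × Fin M))
          = (e : Sym2 V) := by
        rw [Sym2.map_pair_eq]
        exact rep_spec' _
      set z : (cover G M α).edgeSet := ⟨_, (SimpleGraph.mem_edgeSet _).mpr
        ((cover_adj_iff hα ((rep (e : Sym2 V)).1, k)
          ((rep (e : Sym2 V)).2, α (rep (e : Sym2 V)).1 (rep (e : Sym2 V)).2 k)).2
          ⟨adj_rep e, rfl⟩)⟩ with hzdef
      have hm : mape hα z = e := Subtype.ext hmap
      have hspec := idxe_spec hα z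
      rw [show ((mape hα z : G.edgeSet) : Sym2 V) = (e : Sym2 V) from congrArg _ hm] at hspec
      have hi : k = idxe hα z := idx_unique α e hspec
      rw [Prod.ext_iff]
      exact ⟨congrArg Sum.inr hm, hi.symm⟩

section CoverSub
variable {V : Type} {G : SimpleGraph V} {M : ℕ} {α : V → V → Equiv.Perm (Fin M)}

lemma coverSub_adj_inl_inr (hα : IsVoltage G M α) (p : V × Fin M)
    (et : (cover G M α).edgeSet) :
    (subdivision (cover G M α)).Adj (Sum.inl p) (Sum.inr et) ↔
    (cover (subdivision G) M (subVolt G M α)).Adj (Sum.inl p.1, p.2)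
      (Sum.inr (mape hα et), idxe hα et) := by
  have hβ := subVolt_isVoltage G M α
  have hne : (rep ((mape hα et : G.edgeSet) : Sym2 V)).1
      ≠ (rep ((mape hα et : G.edgeSet) : Sym2 V)).2 := (adj_rep (mape hα et)).ne
  have hspec := idxe_spec hα et
  rw [subdivision_adj_inl_inr, cover_adj_iff hβ]
  dsimp only
  rw [subdivision_adj_inl_inr, subVolt_inl_inr]
  constructor
  · intro hmem
    rw [hspec, Sym2.mem_iff] at hmem
    rcases hmem with hp | hp
    · subst hp
      refine ⟨?_, ?_⟩
      · exact fst_mem_rep _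
      · rw [if_neg]
        · rfl
        · rintro ⟨-, hc⟩
          exact hc rfl
    · subst hp
      refine ⟨?_, ?_⟩
      · exact snd_mem_rep _
      · rw [if_pos ⟨rfl, fun hh => hne hh.symm⟩]
        simp
  · rintro ⟨hadj, hidx⟩
    rw [← rep_spec' ((mape hα et : G.edgeSet) : Sym2 V), Sym2.mem_iff] at hadj
    rw [hspec, Sym2.mem_iff]
    rcases hadj with h1 | h1
    · left
      rw [if_neg (by rintro ⟨-, hc2⟩; exact hc2 h1)] at hidx
      exact Prod.ext h1 (by rw [hidx]; rfl)
    · right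
      rw [if_pos ⟨h1, by rw [h1]; exact fun hh => hne hh.symm⟩] at hidx
      refine Prod.ext h1 ?_
      rw [hidx]
      simp

lemma coverSub_adj (hα : IsVoltage G M α) (x y : (V × Fin M) ⊕ (cover G M α).edgeSet) :
    (subdivision (cover G M α)).Adj x y ↔
    (cover (subdivision G) M (subVolt G M α)).Adj
      ((coverSubEquiv hα) x) ((coverSubEquiv hα) y) := by
  have hβ := subVolt_isVoltage G M α
  rcases x with p | et <;> rcases y with q | et'
  · constructor
    · intro hadj; exact absurd hadj (subdivision_not_adj_inl _ p q)
    · intro hadj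
      obtain ⟨h1, -⟩ := (cover_adj_iff hβ _ _).1 hadj
      exact absurd h1 (subdivision_not_adj_inl _ p.1 q.1)
  · exact coverSub_adj_inl_inr hα p et'
  · exact ⟨fun h => ((coverSub_adj_inl_inr hα q et).1 h.symm).symm,
      fun h => ((coverSub_adj_inl_inr hα q et).2 h.symm).symm⟩
  · constructor
    · intro hadj; exact absurd hadj (subdivision_not_adj_inr _ et et')
    · intro hadj
      obtain ⟨h1, -⟩ := (cover_adj_iff hβ _ _).1 hadj
      exact absurd h1 (subdivision_not_adj_inr _ (mape hα et) (mape hα et'))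

end CoverSub

lemma partitionZ_nonneg {V : Type} [Fintype V] (G : SimpleGraph V) (J : Sym2 V → ℝ)
    (h : V → ℝ) : 0 ≤ partitionZ G J h :=
  Finset.sum_nonneg fun s _ => (Real.exp_pos _).le

lemma iSum_nonneg {A : Type} [Fintype A] (K : SimpleGraph A) {w : A → ℝ}
    (hw : ∀ i, 0 ≤ w i) : 0 ≤ iSum K w :=
  Finset.sum_nonneg fun I _ => Finset.prod_nonneg fun v _ => hw v

lemma Zcover_le
    (hyp : ∀ (W : Type) [Fintype W] (H : SimpleGraph W), H.Colorable 2 →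
      ∀ M : ℕ, 1 ≤ M → ∀ β : W → W → Equiv.Perm (Fin M), IsVoltage H M β →
      ∀ m : W →₀ ℕ,
        MvPolynomial.coeff m
            (MvPolynomial.rename Prod.fst (indepPoly (cover H M β)))
          ≤ MvPolynomial.coeff m ((indepPoly H) ^ M))
    {V : Type} [Fintype V] (G : SimpleGraph V) (J : Sym2 V → ℝ) (h : V → ℝ)
    (hJ : ∀ e ∈ G.edgeSet, 0 ≤ J e) (M : ℕ) (hM : 1 ≤ M)
    (α : V → V → Equiv.Perm (Fin M)) (hα : IsVoltage G M α) :
    partitionZ (cover G M α) (fun e => J (Sym2.map Prod.fst e)) (fun p => h p.1)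
      ≤ (partitionZ G J h) ^ M := by
  classical
  set w₀ : (V ⊕ G.edgeSet) → ℝ :=
    Sum.elim (fun v => Real.exp (-h v)) (fun e => Real.exp (J (e : Sym2 V)) - 1) with hw₀def
  have hw₀ : ∀ i, 0 ≤ w₀ i := by
    rintro (v | e)
    · exact (Real.exp_pos _).le
    · have h1 : (1:ℝ) ≤ Real.exp (J (e : Sym2 V)) := by
        rw [← Real.exp_zero]
        exact Real.exp_le_exp.2 (hJ _ e.2)
      simpa [hw₀def] using sub_nonneg.2 h1
  have hβ := subVolt_isVoltage G M α
  -- Step A : expand the cover partition function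
  have stepA := partitionZ_eq (cover G M α) (fun e => J (Sym2.map Prod.fst e)) (fun p => h p.1)
  -- Step C : transport along the equivalence
  have stepC : iSum (subdivision (cover G M α))
      (Sum.elim (fun p : V × Fin M => Real.exp (-h p.1))
        (fun et : (cover G M α).edgeSet => Real.exp (J (Sym2.map Prod.fst (et : Sym2 (V × Fin M)))) - 1))
      = iSum (cover (subdivision G) M (subVolt G M α)) (w₀ ∘ Prod.fst) := by
    have := iSum_congr_equiv (subdivision (cover G M α))
      (cover (subdivision G) M (subVolt G M α)) (coverSubEquiv hα) (coverSub_adj hα)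
      (w₀ ∘ Prod.fst)
    rw [← this]
    congr 1
    funext x
    rcases x with p | et <;> rfl
  -- Step D : apply the hypothesis
  have stepD : iSum (cover (subdivision G) M (subVolt G M α)) (w₀ ∘ Prod.fst)
      ≤ (iSum (subdivision G) w₀) ^ M := by
    rw [← eval_indepPoly, ← eval_indepPoly, ← MvPolynomial.eval_rename, ← map_pow]
    exact eval_le_of_coeff_le
      (hyp (V ⊕ G.edgeSet) (subdivision G) (subdivision_colorable G) M hM
        (subVolt G M α) hβ) hw₀
  -- Step E : the field term
  have stepE : Real.exp (∑ p : V × Fin M, h p.1) = (Real.exp (∑ v, h v)) ^ M := by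
    rw [Fintype.sum_prod_type]
    simp only [Finset.sum_const, Finset.card_univ, Fintype.card_fin, nsmul_eq_mul]
    rw [← Finset.mul_sum, Real.exp_nat_mul]
  rw [stepA, stepC, stepE, partitionZ_eq G J h, mul_pow]
  exact mul_le_mul_of_nonneg_left stepD (pow_nonneg (Real.exp_pos _).le M)

end Aux

/-- If `Π(p(H̃)) ⪯ p(H)^M` for every finite bipartite graph `H` and every
`M`-cover `H̃`, then for attractive models the Bethe partition function,
`limsup_M (mean of Z over all M-covers)^(1/M)`, is at most `Z(G;J,h)`. -/
theorem stmt1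
    (hyp : ∀ (W : Type) [Fintype W] (H : SimpleGraph W), H.Colorable 2 →
      ∀ M : ℕ, 1 ≤ M → ∀ β : W → W → Equiv.Perm (Fin M), IsVoltage H M β →
      ∀ m : W →₀ ℕ,
        MvPolynomial.coeff m
            (MvPolynomial.rename Prod.fst (indepPoly (cover H M β)))
          ≤ MvPolynomial.coeff m ((indepPoly H) ^ M))
    {V : Type} [Fintype V] (G : SimpleGraph V) (J : Sym2 V → ℝ) (h : V → ℝ)
    (hJ : ∀ e ∈ G.edgeSet, 0 ≤ J e) :
    Filter.limsup
      (fun M : ℕ =>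
        ((∑ α : {α : V → V → Equiv.Perm (Fin M) // IsVoltage G M α},
            partitionZ (cover G M α.1)
              (fun e => J (Sym2.map Prod.fst e)) (fun p => h p.1))
          / (M.factorial : ℝ) ^ G.edgeFinset.card) ^ (1 / (M : ℝ)))
      Filter.atTop
      ≤ partitionZ G J h := by

  classical
  have hZ0 : 0 ≤ partitionZ G J h := partitionZ_nonneg G J h
  have hbase : ∀ M : ℕ, 0 ≤ (∑ α : {α : V → V → Equiv.Perm (Fin M) // IsVoltage G M α},
      partitionZ (cover G M α.1)
        (fun e => J (Sym2.map Prod.fst e)) (fun p => h p.1))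
      / (M.factorial : ℝ) ^ G.edgeFinset.card := by
    intro M
    apply div_nonneg
    · exact Finset.sum_nonneg fun α _ => partitionZ_nonneg _ _ _
    · apply pow_nonneg
      exact_mod_cast Nat.zero_le _
  apply Filter.limsup_le_of_le
  · apply Filter.isCoboundedUnder_le_of_le Filter.atTop (x := 0)
    intro M
    exact Real.rpow_nonneg (hbase M) _
  · filter_upwards [Filter.eventually_ge_atTop 1] with M hM
    have hfac : (0:ℝ) < ((M.factorial : ℝ)) ^ G.edgeFinset.card := by
      apply pow_pos
      exact_mod_cast M.factorial_pos
    have hsum : (∑ α : {α : V → V → Equiv.Perm (Fin M) // IsVoltage G M α},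
        partitionZ (cover G M α.1)
          (fun e => J (Sym2.map Prod.fst e)) (fun p => h p.1))
        ≤ ((M.factorial : ℝ)) ^ G.edgeFinset.card * (partitionZ G J h) ^ M := by
      calc (∑ α : {α : V → V → Equiv.Perm (Fin M) // IsVoltage G M α},
          partitionZ (cover G M α.1)
            (fun e => J (Sym2.map Prod.fst e)) (fun p => h p.1))
          ≤ ∑ _α : {α : V → V → Equiv.Perm (Fin M) // IsVoltage G M α},
              (partitionZ G J h) ^ M :=
            Finset.sum_le_sum (fun α _ => Zcover_le hyp G J h hJ M hM α.1 α.2)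
        _ = (Fintype.card {α : V → V → Equiv.Perm (Fin M) // IsVoltage G M α} : ℝ) *
              (partitionZ G J h) ^ M := by
            rw [Finset.sum_const, Finset.card_univ, nsmul_eq_mul]
        _ = ((M.factorial : ℝ)) ^ G.edgeFinset.card * (partitionZ G J h) ^ M := by
            rw [card_voltage G M]
            push_cast
            ring
    have hdiv : (∑ α : {α : V → V → Equiv.Perm (Fin M) // IsVoltage G M α},
        partitionZ (cover G M α.1)
          (fun e => J (Sym2.map Prod.fst e)) (fun p => h p.1))
        / (M.factorial : ℝ) ^ G.edgeFinset.card ≤ (partitionZ G J h) ^ M := by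
      rw [div_le_iff₀ hfac, mul_comm]
      exact hsum
    calc ((∑ α : {α : V → V → Equiv.Perm (Fin M) // IsVoltage G M α},
          partitionZ (cover G M α.1)
            (fun e => J (Sym2.map Prod.fst e)) (fun p => h p.1))
          / (M.factorial : ℝ) ^ G.edgeFinset.card) ^ (1 / (M : ℝ))
        ≤ ((partitionZ G J h) ^ M) ^ (1 / (M : ℝ)) :=
          Real.rpow_le_rpow (hbase M) hdiv (by positivity)
      _ = partitionZ G J h := by
          have hM0 : (M : ℝ) ≠ 0 := Nat.cast_ne_zero.mpr (by omega)
          rw [← Real.rpow_natCast (partitionZ G J h) M, ← Real.rpow_mul hZ0,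
            mul_one_div, div_self hM0, Real.rpow_one]
end

section
/- For every finite simple graph G = (V,E) and interactions J : E → ℝ, h : V → ℝ, the partition function admits the expansion Z(G;J,h) = (∏_{v∈V} e^{h_v}) · Σ_{(S,U)} ∏_{uv∈S} A_{uv} ∏_{v∈U} B_v, where A_{uv} := e^{J_{uv}} − 1, B_v := e^{−h_v}, and the sum ranges over all pairs (S,U) with S ⊆ E, U ⊆ V such that no vertex of U is an endpoint of any edge of S. -/
open scoped Classical

private lemma sigma_eq {V : Type} (s : V → Bool) (e : Sym2 V) :
    Sym2.lift ⟨fun u v => (if s u then (1:ℝ) else 0) * (if s v then (1:ℝ) else 0),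
      fun u v => by ring⟩ e
    = if (∀ v ∈ e, s v = true) then 1 else 0 := by
  induction e using Sym2.ind with
  | _ u v =>
    by_cases hu : s u <;> by_cases hv : s v <;>
      simp [Sym2.mem_iff, hu, hv]

/-- high-temperature expansion of the partition function:
`Z = (∏ v e^{h_v}) Σ_{(S,U) not adjacent} ∏_{uv ∈ S} A_{uv} ∏_{v ∈ U} B_v`
with `A_{uv} = e^{J_{uv}} - 1`, `B_v = e^{-h_v}`. -/
theorem stmt2 {V : Type} [Fintype V] (G : SimpleGraph V)
    (J : Sym2 V → ℝ) (h : V → ℝ) :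
    partitionZ G J h
      = (∏ v, Real.exp (h v)) *
        ∑ S ∈ G.edgeFinset.powerset,
          ∑ U ∈ (Finset.univ : Finset V).powerset.filter
              (fun U => ∀ v ∈ U, ∀ e ∈ S, v ∉ e),
            (∏ e ∈ S, (Real.exp (J e) - 1)) * ∏ v ∈ U, Real.exp (-h v) := by
  classical
  have key : ∀ s : V → Bool,
      Real.exp ((∑ e ∈ G.edgeFinset,
          J e * Sym2.lift ⟨fun u v => (if s u then (1:ℝ) else 0) * (if s v then (1:ℝ) else 0),
            fun u v => by ring⟩ e)
        + ∑ v, h v * (if s v then (1:ℝ) else 0))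
      = (∏ v, Real.exp (h v)) *
        ∑ S ∈ G.edgeFinset.powerset,
          (∏ e ∈ S, (Real.exp (J e) - 1)) *
            ((if ∀ e ∈ S, ∀ v ∈ e, s v = true then (1:ℝ) else 0) *
              ∏ v, (if s v then (1:ℝ) else Real.exp (-h v))) := by
    intro s
    rw [Real.exp_add, Real.exp_sum, Real.exp_sum]
    have h1 : ∀ e ∈ G.edgeFinset,
        Real.exp (J e * Sym2.lift ⟨fun u v => (if s u then (1:ℝ) else 0) *
            (if s v then (1:ℝ) else 0), fun u v => by ring⟩ e)
        = (Real.exp (J e) - 1) * (if ∀ v ∈ e, s v = true then (1:ℝ) else 0) + 1 := by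
      intro e _
      rw [sigma_eq]
      split_ifs with hc <;> simp
    have h2 : ∀ v ∈ (Finset.univ : Finset V),
        Real.exp (h v * (if s v then (1:ℝ) else 0))
        = Real.exp (h v) * (if s v then (1:ℝ) else Real.exp (-h v)) := by
      intro v _
      by_cases hv : s v <;> simp [hv, ← Real.exp_add]
    rw [Finset.prod_congr rfl h1, Finset.prod_add, Finset.prod_congr rfl h2,
      Finset.prod_mul_distrib, Finset.sum_mul, Finset.mul_sum]
    refine Finset.sum_congr rfl fun S hS => ?_
    rw [Finset.prod_mul_distrib, Finset.prod_boole]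
    simp only [Finset.prod_const_one, mul_one]
    split_ifs <;> ring
  rw [partitionZ, Finset.sum_congr rfl fun s _ => key s, ← Finset.mul_sum]
  congr 1
  rw [Finset.sum_comm]
  refine Finset.sum_congr rfl fun S hS => ?_
  rw [← Finset.mul_sum, ← Finset.mul_sum]
  congr 1
  have hsplit : ∀ s : V → Bool,
      (if ∀ e ∈ S, ∀ v ∈ e, s v = true then (1:ℝ) else 0) *
        ∏ v, (if s v then (1:ℝ) else Real.exp (-h v))
      = if (∀ e ∈ S, ∀ v ∈ e, s v = true) then
          ∏ v, (if s v then (1:ℝ) else Real.exp (-h v)) else 0 := by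
    intro s
    by_cases hc : ∀ e ∈ S, ∀ v ∈ e, s v = true <;> simp [hc]
  rw [Finset.sum_congr rfl fun s _ => hsplit s, ← Finset.sum_filter]
  refine Finset.sum_nbij' (fun s => Finset.univ.filter (fun v => s v = false))
    (fun U => fun v => decide (v ∉ U)) ?_ ?_ ?_ ?_ ?_
  · intro s hs
    simp only [Finset.mem_filter, Finset.mem_univ, true_and, Finset.mem_powerset] at hs ⊢
    refine ⟨Finset.filter_subset _ _, fun v hv e he hve => ?_⟩
    rw [hs e he v hve] at hv
    simp at hv
  · intro U hU
    simp only [Finset.mem_filter, Finset.mem_univ, true_and, Finset.mem_powerset] at hU ⊢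
    intro e he v hve
    simp only [decide_eq_true_eq]
    intro hvU
    exact hU.2 v hvU e he hve
  · intro s _
    funext v
    cases hsv : s v <;> simp [hsv]
  · intro U hU
    ext v
    simp
  · intro s _
    rw [Finset.prod_filter]
    refine Finset.prod_congr rfl fun v _ => ?_
    cases hsv : s v <;> simp [hsv]
end
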